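/- Let Δ be a simplicial complex on {1,…,n} and F a face of Δ. Then the relative simplicial cohomology H^{i}(Δ, cost F; k) is isomorphic to the reduced simplicial cohomology H̃^{i−|F|}(lk F; k) of the link of F, for all i. -/

import Mathlib

namespace SR
open Classical

variable (k : Type) [Field k] {n : ℕ}

/-- A simplicial complex on `Fin n`: a downward closed family of finite vertex sets. -/
def IsComplex {n : ℕ} (Δ : Set (Finset (Fin n))) : Prop := ∀ F ∈ Δ, ∀ G ⊆ F, G ∈ Δ

/-- `Δ` is pure `(d-1)`-dimensional: every face is contained in a face of cardinality `d`. -/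
def IsPure {n : ℕ} (Δ : Set (Finset (Fin n))) (d : ℕ) : Prop :=
  (∀ F ∈ Δ, ∃ G ∈ Δ, F ⊆ G ∧ G.card = d) ∧ ∀ F ∈ Δ, F.card ≤ d

/-- The link of a face `F`. -/
def lk {n : ℕ} (Δ : Set (Finset (Fin n))) (F : Finset (Fin n)) : Set (Finset (Fin n)) :=
  {G | F ∩ G = ∅ ∧ F ∪ G ∈ Δ}

/-- The contrastar of a face `τ`: the faces of `Δ` not containing `τ`. -/
def cost {n : ℕ} (Δ : Set (Finset (Fin n))) (τ : Finset (Fin n)) : Set (Finset (Fin n)) :=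
  {γ ∈ Δ | ¬ τ ⊆ γ}

/-- Relative simplicial `i`-cochains of the pair `(Δ, Γ)` with coefficients in `k`:
functions on the `i`-dimensional faces of `Δ` not lying in `Γ` (a face of dimension `i` has
`i + 1` vertices; the empty face has dimension `-1`).  For `Γ = ∅` these are the reduced
(augmented) cochains of `Δ`. -/
abbrev Cch (Δ Γ : Set (Finset (Fin n))) (i : ℤ) : Type :=
  {F : Finset (Fin n) // F ∈ Δ ∧ F ∉ Γ ∧ (F.card : ℤ) = i + 1} → k

/-- The simplicial coboundary map from relative `i₀`-cochains to relative `(i₀+1)`-cochains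
(formulated with independent source and target degrees `i₀`, `j`; it is the zero map unless
`j = i₀ + 1`): `(δ f)(F) = Σ_{v ∈ F} (-1)^{|{w ∈ F : w < v}|} f(F \ v)`. -/
noncomputable def cob (Δ Γ : Set (Finset (Fin n))) (i₀ j : ℤ) : Cch k Δ Γ i₀ →ₗ[k] Cch k Δ Γ j where
  toFun f F := ∑ v ∈ F.1, ((-1 : k) ^ ((F.1.filter (fun w => w < v)).card)) *
      (if h : (F.1.erase v ∈ Δ ∧ F.1.erase v ∉ Γ ∧ ((F.1.erase v).card : ℤ) = i₀ + 1)
        then f ⟨F.1.erase v, h⟩ else 0)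
  map_add' f g := by
    funext F
    rw [Pi.add_apply, ← Finset.sum_add_distrib]
    refine Finset.sum_congr rfl fun v _ => ?_
    split
    · simp [mul_add]
    · ring
  map_smul' c f := by
    funext F
    rw [RingHom.id_apply, Pi.smul_apply, smul_eq_mul, Finset.mul_sum]
    refine Finset.sum_congr rfl fun v _ => ?_
    split
    · rw [Pi.smul_apply, smul_eq_mul]; ring
    · ring

/-- Relative simplicial cohomology `H^i(Δ, Γ; k)` in degree `i`:
cocycles modulo coboundaries.  For `Γ = ∅` this is reduced cohomology `H̃^i(Δ; k)`. -/
abbrev Coh (Δ Γ : Set (Finset (Fin n))) (i : ℤ) :=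
  ↥(LinearMap.ker (cob k Δ Γ i (i + 1))) ⧸
    (Submodule.comap (LinearMap.ker (cob k Δ Γ i (i + 1))).subtype
      (LinearMap.range (cob k Δ Γ (i - 1) i)))


-- auxiliary section to splice in
open LinearMap Submodule in
lemma coh_equiv {R : Type*} [Field R] {M0 M M2 N0 N N2 : Type*}
    [AddCommGroup M0] [Module R M0] [AddCommGroup M] [Module R M]
    [AddCommGroup M2] [Module R M2] [AddCommGroup N0] [Module R N0]
    [AddCommGroup N] [Module R N] [AddCommGroup N2] [Module R N2]
    (d0 : M0 →ₗ[R] M) (d1 : M →ₗ[R] M2) (d0' : N0 →ₗ[R] N) (d1' : N →ₗ[R] N2)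
    (e0 : M0 ≃ₗ[R] N0) (e : M ≃ₗ[R] N) (e2 : M2 ≃ₗ[R] N2)
    (h0 : e.toLinearMap.comp d0 = d0'.comp e0.toLinearMap)
    (h1 : e2.toLinearMap.comp d1 = d1'.comp e.toLinearMap) :
    Nonempty ((↥(ker d1) ⧸ (comap (ker d1).subtype (range d0))) ≃ₗ[R]
      (↥(ker d1') ⧸ (comap (ker d1').subtype (range d0')))) := by
  have hrange : (range d0).map e.toLinearMap = range d0' := by
    rw [← LinearMap.range_comp, h0, LinearMap.range_comp, LinearEquiv.range, Submodule.map_top]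
  have hd1' : d1' = (e2.toLinearMap.comp d1).comp e.symm.toLinearMap := by
    rw [h1, LinearMap.comp_assoc]
    simp [LinearEquiv.comp_coe]
  have hker : (ker d1).map e.toLinearMap = ker d1' := by
    rw [hd1', LinearMap.ker_comp, LinearMap.ker_comp, LinearEquiv.ker, Submodule.comap_bot]
    exact Submodule.map_equiv_eq_comap_symm e (ker d1)
  set eker : (ker d1) ≃ₗ[R] (ker d1') :=
    (e.submoduleMap (ker d1)).trans (LinearEquiv.ofEq _ _ hker) with heker
  have hek : ∀ y : ker d1, (↑(eker y) : N) = e ↑y := by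
    intro y
    simp [heker, LinearEquiv.trans_apply, LinearEquiv.coe_ofEq_apply,
      LinearEquiv.submoduleMap_apply]
  refine ⟨Submodule.Quotient.equiv _ _ eker ?_⟩
  ext x
  simp only [Submodule.mem_map, Submodule.mem_comap, Submodule.coe_subtype]
  constructor
  · rintro ⟨⟨z, hz⟩, hz0, rfl⟩
    rw [← hrange]
    exact ⟨z, hz0, (hek ⟨z, hz⟩).symm⟩
  · intro hx
    rw [← hrange] at hx
    obtain ⟨z, hz0, hz⟩ := hx
    have hzk : z ∈ ker d1 := by
      have hz' : e z = (x : N) := hz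
      have hx2 : d1' (e z) = 0 := by rw [hz']; exact x.2
      have : e2 (d1 z) = 0 := by
        have := congrFun (congrArg (fun f => f.toFun) h1) z
        simpa using this.trans hx2
      rw [LinearMap.mem_ker]
      exact e2.injective (by simpa using this)
    refine ⟨⟨z, hzk⟩, hz0, ?_⟩
    apply Subtype.ext
    exact (hek ⟨z, hzk⟩).trans hz

/-- The sign `(-1)^{Σ_{v ∈ H} |{w ∈ F : w < v}|}`. -/
noncomputable def sgn (F H : Finset (Fin n)) : k :=
  (-1 : k) ^ (∑ v ∈ H, (F.filter (fun w => w < v)).card)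

lemma sgn_sq (F H : Finset (Fin n)) : sgn k F H * sgn k F H = 1 := by
  rw [sgn, ← pow_add]
  exact Even.neg_one_pow (Even.add_self _)

lemma sgn_erase (F H : Finset (Fin n)) {v : Fin n} (hv : v ∈ H) :
    sgn k F H = (-1 : k) ^ ((F.filter (fun w => w < v)).card) * sgn k F (H.erase v) := by
  rw [sgn, sgn, ← pow_add, ← Finset.add_sum_erase _ _ hv]

lemma mem_nocost {Δ : Set (Finset (Fin n))} {F G : Finset (Fin n)}
    (hFG : F ⊆ G) : G ∉ cost Δ F := fun hc => hc.2 hFG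

lemma subset_of_nocost {Δ : Set (Finset (Fin n))} {F G : Finset (Fin n)} (hG : G ∈ Δ)
    (h : G ∉ cost Δ F) : F ⊆ G := by
  by_contra hs; exact h ⟨hG, hs⟩

/-- Extension of a relative cochain by zero to all finsets. -/
noncomputable def extc (Δ Γ : Set (Finset (Fin n))) (j : ℤ) (g : Cch k Δ Γ j)
    (G : Finset (Fin n)) : k :=
  if h : (G ∈ Δ ∧ G ∉ Γ ∧ (G.card : ℤ) = j + 1) then g ⟨G, h⟩ else 0

lemma extc_eq {Δ Γ : Set (Finset (Fin n))} {j : ℤ} (g : Cch k Δ Γ j) {G : Finset (Fin n)}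
    (h : G ∈ Δ ∧ G ∉ Γ ∧ (G.card : ℤ) = j + 1) : extc k Δ Γ j g G = g ⟨G, h⟩ := dif_pos h

lemma extc_ne {Δ Γ : Set (Finset (Fin n))} {j : ℤ} (g : Cch k Δ Γ j) {G : Finset (Fin n)}
    (h : ¬ (G ∈ Δ ∧ G ∉ Γ ∧ (G.card : ℤ) = j + 1)) : extc k Δ Γ j g G = 0 := dif_neg h

lemma cob_apply (Δ Γ : Set (Finset (Fin n))) (i₀ j : ℤ) (f : Cch k Δ Γ i₀)
    (G : {F : Finset (Fin n) // F ∈ Δ ∧ F ∉ Γ ∧ (F.card : ℤ) = j + 1}) :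
    cob k Δ Γ i₀ j f G = ∑ v ∈ G.1, ((-1 : k) ^ ((G.1.filter (fun w => w < v)).card)) *
      extc k Δ Γ i₀ f (G.1.erase v) := rfl

/-- Membership facts for `F ∪ H` when `H` is in the link. -/
lemma union_mem {Δ : Set (Finset (Fin n))} {F H : Finset (Fin n)} {j j' : ℤ}
    (h : j = j' + F.card) (hH : H ∈ lk Δ F ∧ H ∉ (∅ : Set (Finset (Fin n))) ∧ (H.card : ℤ) = j' + 1) :
    F ∪ H ∈ Δ ∧ F ∪ H ∉ cost Δ F ∧ ((F ∪ H).card : ℤ) = j + 1 := by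
  obtain ⟨⟨hint, hun⟩, -, hcard⟩ := hH
  refine ⟨hun, mem_nocost Finset.subset_union_left, ?_⟩
  rw [Finset.card_union_of_disjoint (Finset.disjoint_iff_inter_eq_empty.2 hint)]
  push_cast
  omega

/-- The forward cochain map `(Φf)(H) = sgn(H) f(F ∪ H)`. -/
noncomputable def Emap (Δ : Set (Finset (Fin n))) (F : Finset (Fin n)) (j j' : ℤ)
    (_h : j = j' + F.card) : Cch k Δ (cost Δ F) j →ₗ[k] Cch k (lk Δ F) ∅ j' where
  toFun f H := sgn k F H.1 * extc k Δ (cost Δ F) j f (F ∪ H.1)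
  map_add' f g := by
    funext H
    simp only [Pi.add_apply, extc]
    split
    · simp [mul_add]
    · ring
  map_smul' c f := by
    funext H
    simp only [Pi.smul_apply, smul_eq_mul, RingHom.id_apply, extc]
    split
    · ring
    · ring

/-- The backward cochain map. -/
noncomputable def Einv (Δ : Set (Finset (Fin n))) (F : Finset (Fin n)) (j j' : ℤ)
    (_h : j = j' + F.card) : Cch k (lk Δ F) ∅ j' →ₗ[k] Cch k Δ (cost Δ F) j where
  toFun g G := sgn k F (G.1 \ F) * extc k (lk Δ F) ∅ j' g (G.1 \ F)
  map_add' f g := by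
    funext G
    simp only [Pi.add_apply, extc]
    split
    · simp [mul_add]
    · ring
  map_smul' c f := by
    funext G
    simp only [Pi.smul_apply, smul_eq_mul, RingHom.id_apply, extc]
    split
    · ring
    · ring

lemma sdiff_mem {Δ : Set (Finset (Fin n))} {F G : Finset (Fin n)} {j j' : ℤ}
    (h : j = j' + F.card) (hG : G ∈ Δ ∧ G ∉ cost Δ F ∧ (G.card : ℤ) = j + 1) :
    G \ F ∈ lk Δ F ∧ G \ F ∉ (∅ : Set (Finset (Fin n))) ∧ ((G \ F).card : ℤ) = j' + 1 := by
  obtain ⟨hGd, hnc, hcard⟩ := hG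
  have hsub : F ⊆ G := subset_of_nocost hGd hnc
  refine ⟨⟨Finset.inter_sdiff_self F G, by rwa [Finset.union_sdiff_of_subset hsub]⟩,
    Set.notMem_empty _, ?_⟩
  rw [Finset.card_sdiff_of_subset hsub]
  have hle := Finset.card_le_card hsub
  omega

/-- The cochain isomorphism. -/
noncomputable def Eequiv (Δ : Set (Finset (Fin n))) (F : Finset (Fin n)) (j j' : ℤ)
    (h : j = j' + F.card) : Cch k Δ (cost Δ F) j ≃ₗ[k] Cch k (lk Δ F) ∅ j' := by
  refine LinearEquiv.ofLinear (Emap k Δ F j j' h) (Einv k Δ F j j' h) ?_ ?_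
  · apply LinearMap.ext; intro g; funext H
    have hd : Disjoint F H.1 := Finset.disjoint_iff_inter_eq_empty.2 H.2.1.1
    have hEq : (F ∪ H.1) \ F = H.1 := Finset.union_sdiff_cancel_left hd
    show sgn k F H.1 * extc k Δ (cost Δ F) j (Einv k Δ F j j' h g) (F ∪ H.1) = g H
    rw [extc_eq k _ (union_mem h H.2)]
    show sgn k F H.1 * (sgn k F ((F ∪ H.1) \ F) *
      extc k (lk Δ F) ∅ j' g ((F ∪ H.1) \ F)) = g H
    rw [hEq, extc_eq k g H.2, ← mul_assoc, sgn_sq, one_mul, Subtype.coe_eta]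
  · apply LinearMap.ext; intro f; funext G
    have hsub : F ⊆ G.1 := subset_of_nocost G.2.1 G.2.2.1
    have hEq : F ∪ (G.1 \ F) = G.1 := Finset.union_sdiff_of_subset hsub
    show sgn k F (G.1 \ F) * extc k (lk Δ F) ∅ j' (Emap k Δ F j j' h f) (G.1 \ F) = f G
    rw [extc_eq k _ (sdiff_mem h G.2)]
    show sgn k F (G.1 \ F) * (sgn k F (G.1 \ F) *
      extc k Δ (cost Δ F) j f (F ∪ (G.1 \ F))) = f G
    rw [hEq, extc_eq k f G.2, ← mul_assoc, sgn_sq, one_mul, Subtype.coe_eta]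

/-- The key commutation: the cochain isomorphism intertwines the coboundaries. -/
lemma Emap_comm (Δ : Set (Finset (Fin n))) (F : Finset (Fin n)) (j j₁ j' j₁' : ℤ)
    (h : j = j' + F.card) (h1 : j₁ = j₁' + F.card) (f : Cch k Δ (cost Δ F) j) :
    Emap k Δ F j₁ j₁' h1 (cob k Δ (cost Δ F) j j₁ f)
      = cob k (lk Δ F) ∅ j' j₁' (Emap k Δ F j j' h f) := by
  funext H
  have hd : Disjoint F H.1 := Finset.disjoint_iff_inter_eq_empty.2 H.2.1.1
  show sgn k F H.1 * extc k Δ (cost Δ F) j₁ (cob k Δ (cost Δ F) j j₁ f) (F ∪ H.1) = _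
  rw [extc_eq k _ (union_mem h1 H.2), cob_apply, cob_apply]
  simp only []
  rw [Finset.sum_union hd, Finset.sum_eq_zero (fun v hv => ?vF), zero_add, Finset.mul_sum]
  case vF =>
    -- terms with v ∈ F vanish
    rw [extc_ne k f ?_, mul_zero]
    rintro ⟨hA, hB, -⟩
    exact hB ⟨hA, fun hs => Finset.notMem_erase v _ (hs hv)⟩
  refine Finset.sum_congr rfl fun v hv => ?_
  have hvF : v ∉ F := Finset.disjoint_right.mp hd hv
  have he : (F ∪ H.1).erase v = F ∪ H.1.erase v := by
    rw [Finset.erase_union_distrib, Finset.erase_eq_of_notMem hvF]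
  have hfil : ((F ∪ H.1).filter (fun w => w < v)).card
      = (F.filter (fun w => w < v)).card + (H.1.filter (fun w => w < v)).card := by
    rw [Finset.filter_union,
      Finset.card_union_of_disjoint (hd.mono (Finset.filter_subset _ _) (Finset.filter_subset _ _))]
  have hCimp : (F ∪ H.1.erase v ∈ Δ ∧ F ∪ H.1.erase v ∉ cost Δ F ∧
      (((F ∪ H.1.erase v).card : ℤ)) = j + 1) →
      (H.1.erase v ∈ lk Δ F ∧ H.1.erase v ∉ (∅ : Set (Finset (Fin n))) ∧
        (((H.1.erase v).card : ℤ)) = j' + 1) := by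
    rintro ⟨hA, -, hC⟩
    have hd' : Disjoint F (H.1.erase v) := hd.mono_right (Finset.erase_subset _ _)
    refine ⟨⟨Finset.disjoint_iff_inter_eq_empty.1 hd', hA⟩, Set.notMem_empty _, ?_⟩
    rw [Finset.card_union_of_disjoint hd'] at hC
    push_cast at hC ⊢
    omega
  by_cases hC : (H.1.erase v ∈ lk Δ F ∧ H.1.erase v ∉ (∅ : Set (Finset (Fin n))) ∧
      (((H.1.erase v).card : ℤ)) = j' + 1)
  · rw [extc_eq k _ hC]
    show sgn k F H.1 * ((-1 : k) ^ (((F ∪ H.1).filter (fun w => w < v)).card) *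
        extc k Δ (cost Δ F) j f ((F ∪ H.1).erase v))
      = (-1 : k) ^ ((H.1.filter (fun w => w < v)).card) *
        (sgn k F (H.1.erase v) * extc k Δ (cost Δ F) j f (F ∪ H.1.erase v))
    rw [he, hfil, pow_add, sgn_erase k F H.1 hv]
    have hbb : (-1 : k) ^ ((F.filter (fun w => w < v)).card) *
        (-1 : k) ^ ((F.filter (fun w => w < v)).card) = 1 := by
      rw [← pow_add]; exact Even.neg_one_pow (Even.add_self _)
    set X := extc k Δ (cost Δ F) j f (F ∪ H.1.erase v)
    linear_combination (sgn k F (H.1.erase v) *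
      (-1 : k) ^ ((H.1.filter (fun w => w < v)).card) * X) * hbb
  · rw [extc_ne k _ hC, he, extc_ne k f (fun hc => hC (hCimp hc)), mul_zero, mul_zero, mul_zero]

/-- Let `Δ` be a simplicial complex on `{1,…,n}` and `F` a face of `Δ`.  Then the relative
simplicial cohomology `H^i(Δ, cost F; k)` is isomorphic to the reduced simplicial cohomology
`H̃^{i-|F|}(lk F; k)` of the link of `F`, for all `i`. -/
theorem stmt9 (Δ : Set (Finset (Fin n))) (hΔ : IsComplex Δ) (F : Finset (Fin n)) (hF : F ∈ Δ)
    (i : ℤ) :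
    Nonempty ((Coh k Δ (cost Δ F) i) ≃ₗ[k] (Coh k (lk Δ F) ∅ (i - F.card))) := by
  refine coh_equiv (cob k Δ (cost Δ F) (i - 1) i) (cob k Δ (cost Δ F) i (i + 1))
    (cob k (lk Δ F) ∅ (i - F.card - 1) (i - F.card))
    (cob k (lk Δ F) ∅ (i - F.card) (i - F.card + 1))
    (Eequiv k Δ F (i - 1) (i - F.card - 1) (by omega))
    (Eequiv k Δ F i (i - F.card) (by omega))
    (Eequiv k Δ F (i + 1) (i - F.card + 1) (by omega)) ?_ ?_
  · apply LinearMap.ext; intro f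
    exact Emap_comm k Δ F (i - 1) i (i - F.card - 1) (i - F.card) (by omega) (by omega) f
  · apply LinearMap.ext; intro f
    exact Emap_comm k Δ F i (i + 1) (i - F.card) (i - F.card + 1) (by omega) (by omega) f

end SR
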